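/- Let Δ ≥ 1, r ≥ 1 and let A = [I_r | D_r | f] where D_r has columns e_i − e_j for 1 ≤ i < j ≤ r and f ∈ ℤ^r. If A is Δ-modular, then the sum of the positive entries of f is at most Δ and the sum of the absolute values of the negative entries of f is at most Δ. -/

import Mathlib

/-- The matrix `[I_r | D_r | f]`, where `D_r` has columns `eᵢ − eⱼ` for `i < j`. -/
def cliqueExtMatrix (r : ℕ) (f : Fin r → ℤ) :
    Matrix (Fin r) (Fin r ⊕ {p : Fin r × Fin r // p.1 < p.2} ⊕ Unit) ℤ :=
  Matrix.of fun i j =>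
    match j with
    | Sum.inl k => if i = k then 1 else 0
    | Sum.inr (Sum.inl p) => (if i = p.1.1 then 1 else 0) - (if i = p.1.2 then 1 else 0)
    | Sum.inr (Sum.inr _) => f i

lemma det_updateRow_add_sum {n R : Type*} [DecidableEq n] [Fintype n] [CommRing R]
    (A : Matrix n n R) (i : n) (T : Finset n) (hT : i ∉ T) :
    (A.updateRow i (A i + ∑ j ∈ T, A j)).det = A.det := by
  classical
  induction T using Finset.induction_on with
  | empty => erw [Finset.sum_empty, add_zero, Matrix.updateRow_eq_self]
  | @insert j T hj ih =>
    have hiT : i ∉ T := fun h => hT (Finset.mem_insert_of_mem h)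
    have hij : i ≠ j := fun h => hT (h ▸ Finset.mem_insert_self j T)
    set B := A.updateRow i (A i + ∑ k ∈ T, A k) with hB
    have h1 : A.updateRow i (A i + ∑ k ∈ insert j T, A k)
        = B.updateRow i (B i + (1 : R) • B j) := by
      ext a b
      by_cases ha : a = i
      · subst ha
        simp [hB, Matrix.updateRow_self, Matrix.updateRow_ne hij.symm,
          Finset.sum_insert hj]
        erw [Finset.sum_insert hj]
        simp
        ring
      · simp [hB, Matrix.updateRow_ne ha]
    rw [h1, Matrix.det_updateRow_add_smul_self B hij, ih hiT]

lemma aux_pos_sum (Δ : ℤ) (hΔ : 1 ≤ Δ) (r : ℕ) (f : Fin r → ℤ)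
    (hmod : ∀ g : Fin r → (Fin r ⊕ {p : Fin r × Fin r // p.1 < p.2} ⊕ Unit),
      |((cliqueExtMatrix r f).submatrix id g).det| ≤ Δ) :
    ∑ i, max (f i) 0 ≤ Δ := by
  classical
  by_cases hpos : ∃ i, 0 < f i
  · obtain ⟨i₀, hi₀⟩ := hpos
    set g : Fin r → (Fin r ⊕ {p : Fin r × Fin r // p.1 < p.2} ⊕ Unit) := fun i =>
      if h : 0 < f i then
        if h2 : i = i₀ then Sum.inr (Sum.inr ())
        else if h3 : i₀ < i then Sum.inr (Sum.inl ⟨(i₀, i), h3⟩)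
        else Sum.inr (Sum.inl ⟨(i, i₀), (not_lt.mp h3).lt_of_ne h2⟩)
      else Sum.inl i with hg
    set N := (cliqueExtMatrix r f).submatrix id g with hNdef
    have hN : ∀ k i, N k i =
        if 0 < f i then
          if i = i₀ then f k
          else if i₀ < i then (if k = i₀ then 1 else 0) - (if k = i then 1 else 0)
          else (if k = i then 1 else 0) - (if k = i₀ then 1 else 0)
        else if k = i then 1 else 0 := by
      intro k i
      simp only [hNdef, Matrix.submatrix_apply, id, hg]
      by_cases h : 0 < f i
      · by_cases h2 : i = i₀
        · subst h2
          rw [dif_pos h, dif_pos rfl, if_pos h, if_pos rfl]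
          simp [cliqueExtMatrix]
        · by_cases h3 : i₀ < i
          · rw [dif_pos h, dif_neg h2, dif_pos h3, if_pos h, if_neg h2, if_pos h3]
            simp [cliqueExtMatrix]
          · rw [dif_pos h, dif_neg h2, dif_neg h3, if_pos h, if_neg h2, if_neg h3]
            simp [cliqueExtMatrix]
      · rw [dif_neg h, if_neg h]
        simp [cliqueExtMatrix]
    set T : Finset (Fin r) := Finset.univ.filter (fun j => 0 < f j ∧ j ≠ i₀) with hT
    have hi₀T : i₀ ∉ T := by simp [hT]
    set σ : ℤ := ∑ i, max (f i) 0 with hσ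
    have hσnn : 0 ≤ σ := Finset.sum_nonneg fun i _ => le_max_right _ _
    have hTerase : T = (Finset.univ.filter (fun j => 0 < f j)).erase i₀ := by
      ext x
      simp only [hT, Finset.mem_filter, Finset.mem_erase, Finset.mem_univ, true_and]
      tauto
    have hsum : f i₀ + ∑ j ∈ T, f j = σ := by
      rw [hσ, hTerase, Finset.add_sum_erase _ f (by simp [hi₀]), Finset.sum_filter]
      refine Finset.sum_congr rfl fun x _ => ?_
      by_cases hx : 0 < f x
      · simp [hx, max_eq_left hx.le]
      · simp [hx, max_eq_right (not_lt.mp hx)]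
    set N' := N.updateRow i₀ (N i₀ + ∑ j ∈ T, N j) with hN'
    have hdet1 : N'.det = N.det := det_updateRow_add_sum N i₀ T hi₀T
    have hrow : ∀ i, N' i₀ i = if i = i₀ then σ else 0 := by
      intro i
      rw [hN', Matrix.updateRow_self]
      simp only [Pi.add_apply, Finset.sum_apply]
      erw [Finset.sum_apply]
      by_cases hii : i = i₀
      · subst hii
        rw [if_pos rfl]
        have h1 : N i i = f i := by rw [hN]; simp [hi₀]
        have h2 : ∀ j ∈ T, N j i = f j := by
          intro j hj; rw [hN]; simp [hi₀]
        rw [h1, Finset.sum_congr rfl h2, hsum]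
      · rw [if_neg hii]
        have hi₀i : i₀ ≠ i := fun h => hii h.symm
        by_cases hfi : 0 < f i
        · have hiT : i ∈ T := by simp [hT, hfi, hii]
          by_cases h3 : i₀ < i
          · have h1 : N i₀ i = 1 := by rw [hN]; simp [hfi, hii, h3, hi₀i]
            have h2 : ∀ j ∈ T, N j i = (if j = i₀ then 1 else 0) - (if j = i then 1 else 0) := by
              intro j hj; rw [hN]; simp [hfi, hii, h3, hi₀i]
            rw [h1, Finset.sum_congr rfl h2, Finset.sum_sub_distrib,
              Finset.sum_ite_eq' T i₀ (fun _ => (1:ℤ)),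
              Finset.sum_ite_eq' T i (fun _ => (1:ℤ))]
            simp [hi₀T, hiT]
          · have h1 : N i₀ i = -1 := by rw [hN]; simp [hfi, hii, h3, hi₀i]
            have h2 : ∀ j ∈ T, N j i = (if j = i then 1 else 0) - (if j = i₀ then 1 else 0) := by
              intro j hj; rw [hN]; simp [hfi, hii, h3]
            rw [h1, Finset.sum_congr rfl h2, Finset.sum_sub_distrib,
              Finset.sum_ite_eq' T i (fun _ => (1:ℤ)),
              Finset.sum_ite_eq' T i₀ (fun _ => (1:ℤ))]
            simp [hi₀T, hiT]
        · have hiT : i ∉ T := by simp [hT, hfi]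
          have h1 : N i₀ i = 0 := by rw [hN]; simp [hfi, hi₀i]
          have h2 : ∀ j ∈ T, N j i = (if j = i then 1 else 0) := by
            intro j hj; rw [hN]; simp [hfi]
          rw [h1, Finset.sum_congr rfl h2, Finset.sum_ite_eq' T i (fun _ => (1:ℤ))]
          simp [hiT]
    have hrowN : ∀ k, k ≠ i₀ → ∀ i, N' k i = N k i := by
      intro k hk i; rw [hN', Matrix.updateRow_ne hk]
    set w : Fin r → ℤ := fun k => if k = i₀ then 0 else f k with hw
    set u : Fin r → ℤ := fun k => if k = i₀ then 1 else 0 with hu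
    set d : Fin r → ℤ := fun i => if 0 < f i ∧ i ≠ i₀ ∧ i₀ < i then (-1:ℤ) else 1 with hd
    have hcolde : N' = N'.updateCol i₀ (σ • u + w) := by
      ext k i
      rw [Matrix.updateCol_apply]
      by_cases hii : i = i₀
      · rw [if_pos hii, hii]
        by_cases hk : k = i₀
        · rw [hk]
          simp [hrow i₀, hw, hu]
        · rw [hrowN k hk, hN]
          simp [hi₀, hk, hw, hu]
      · rw [if_neg hii]
    have hD : N'.updateCol i₀ u = Matrix.diagonal d := by
      ext k i
      rw [Matrix.updateCol_apply, Matrix.diagonal_apply]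
      by_cases hii : i = i₀
      · rw [if_pos hii, hii]
        by_cases hk : k = i₀
        · simp [hk, hu, hd]
        · simp [hk, hu, hd]
      · rw [if_neg hii]
        by_cases hk : k = i₀
        · rw [hk, hrow i, if_neg hii, if_neg (fun h => hii h.symm)]
        · rw [hrowN k hk, hN]
          by_cases hfi : 0 < f i <;> by_cases h3 : i₀ < i <;> by_cases hik : k = i <;>
            simp [hfi, h3, hik, hii, hk, hd]
    have hzero : (N'.updateCol i₀ w).det = 0 := by
      apply Matrix.det_eq_zero_of_row_eq_zero i₀
      intro j
      rw [Matrix.updateCol_apply]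
      by_cases hj : j = i₀
      · simp [hj, hw]
      · rw [if_neg hj, hrow j, if_neg hj]
    have hdet2 : N'.det = σ * ∏ i, d i := by
      conv_lhs => rw [hcolde]
      rw [Matrix.det_updateCol_add, Matrix.det_updateCol_smul, hD,
        Matrix.det_diagonal, hzero, add_zero]
    have hprod : |∏ i, d i| = 1 := by
      rw [Finset.abs_prod]
      apply Finset.prod_eq_one
      intro x _
      by_cases hx : 0 < f x ∧ x ≠ i₀ ∧ i₀ < x <;> simp [hd, hx]
    have habs : |N.det| = σ := by
      rw [← hdet1, hdet2, abs_mul, hprod, mul_one, abs_of_nonneg hσnn]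
    calc σ = |N.det| := habs.symm
      _ ≤ Δ := hmod g
  · push_neg at hpos
    have h0 : ∀ i ∈ Finset.univ, max (f i) 0 = 0 := fun i _ => max_eq_right (hpos i)
    rw [Finset.sum_congr rfl h0]
    simpa using hΔ.trans' zero_le_one

/-- If `[I_r | D_r | f]` is `Δ`-modular, then the positive entries of `f` sum to at most `Δ`
and the absolute values of the negative entries of `f` sum to at most `Δ`. -/
theorem pos_neg_entries_sum_le_of_deltaModular (Δ : ℤ) (hΔ : 1 ≤ Δ) (r : ℕ) (hr : 1 ≤ r)
    (f : Fin r → ℤ)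
    (hmod : ∀ g : Fin r → (Fin r ⊕ {p : Fin r × Fin r // p.1 < p.2} ⊕ Unit),
      |((cliqueExtMatrix r f).submatrix id g).det| ≤ Δ) :
    (∑ i, max (f i) 0 ≤ Δ) ∧ (∑ i, max (-(f i)) 0 ≤ Δ) := by
  classical
  constructor
  · exact aux_pos_sum Δ hΔ r f hmod
  · have hmodneg : ∀ g : Fin r → (Fin r ⊕ {p : Fin r × Fin r // p.1 < p.2} ⊕ Unit),
        |((cliqueExtMatrix r (fun i => -f i)).submatrix id g).det| ≤ Δ := by
      intro g
      set d : Fin r → ℤ := fun i => match g i with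
        | Sum.inr (Sum.inr _) => -1
        | _ => 1 with hd
      have heq : (cliqueExtMatrix r (fun i => -f i)).submatrix id g
          = ((cliqueExtMatrix r f).submatrix id g) * Matrix.diagonal d := by
        ext k i
        rw [Matrix.mul_diagonal]
        simp only [Matrix.submatrix_apply, id]
        rcases hgi : g i with k' | p | u
        · simp [cliqueExtMatrix, hd, hgi]
        · simp [cliqueExtMatrix, hd, hgi]
        · simp [cliqueExtMatrix, hd, hgi]
      have habsd : |∏ i, d i| = 1 := by
        rw [Finset.abs_prod]
        apply Finset.prod_eq_one
        intro x _
        rcases hgx : g x with k' | p | u <;> simp [hd, hgx]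
      rw [heq, Matrix.det_mul, Matrix.det_diagonal, abs_mul, habsd, mul_one]
      exact hmod g
    have h := aux_pos_sum Δ hΔ r (fun i => -f i) hmodneg
    simpa using h
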